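/- arXiv:2604.20778 — 2 statements merged into one kernel-verified Lean document; each statement's English description precedes it below -/
import Mathlib

section
/- Let M and N be matroids with the same ground set E. The following are equivalent: (1) N is a quotient of M; (2) M* is a quotient of N*; (3) every flat of N is a flat of M; (4) every circuit of M is a union of circuits of N; (5) r_N(Y | X) ≤ r_M(Y | X) for all X ⊆ Y ⊆ E. -/
open Set

namespace Matroid

variable {α : Type*} {ι : Type*}

/-- The deletion of a set `D` of elements from `M`. -/
def delete' (M : Matroid α) (D : Set α) : Matroid α := M ↾ (M.E \ D)

/-- The contraction of a set `C` of elements from `M`, defined as the dual of the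
deletion of `C` from the dual. -/
def contract' (M : Matroid α) (C : Set α) : Matroid α := (M✶.delete' C)✶

/-- A circuit of `M` is a minimal dependent subset of the ground set. -/
def Circuit (M : Matroid α) (C : Set α) : Prop :=
  C ⊆ M.E ∧ ¬ M.Indep C ∧ ∀ I, I ⊂ C → M.Indep I

/-- The rank of a set `X` in `M`, valued in `ℕ∞`. It is the supremum of the `encard`s of
the independent subsets of `X`; equivalently, the `encard` of any basis of `X`. -/
noncomputable def eRk' (M : Matroid α) (X : Set α) : ℕ∞ :=
  ⨆ I : {I : Set α // M.Indep I ∧ I ⊆ X}, I.1.encard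

/-- The rank of the matroid `M`, valued in `ℕ∞`. -/
noncomputable def eRank' (M : Matroid α) : ℕ∞ := M.eRk' M.E

/-- The nullity of a set `X` in `M`, valued in `ℕ∞` : the corank of the restriction
of `M` to `X`. -/
noncomputable def nullity (M : Matroid α) (X : Set α) : ℕ∞ := (M ↾ X)✶.eRank'

/-- The relative rank of `Y` with respect to `X` : the rank of `Y \ X` in `M / X`. -/
noncomputable def eRelRk (M : Matroid α) (X Y : Set α) : ℕ∞ := (M.contract' X).eRk' (Y \ X)

/-- `B` is a mutual basis in `M` for the indexed set family `X` if `B` is independent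
and `X i ∩ B` is a basis of `X i` in `M` for each index `i`. -/
def IsMutualBasis (M : Matroid α) (B : Set α) (X : ι → Set α) : Prop :=
  M.Indep B ∧ ∀ i, M.IsBasis (X i ∩ B) (X i)

/-- An indexed set family is modular in `M` if it has a mutual basis. -/
def IsModularFamily (M : Matroid α) (X : ι → Set α) : Prop := ∃ B, M.IsMutualBasis B X

/-- `B` is a mutual basis in `M` for the collection `𝓧` of sets if `B` is independent
and `X ∩ B` is a basis of `X` in `M` for each `X ∈ 𝓧`. -/
def IsMutualBasisSet (M : Matroid α) (B : Set α) (𝓧 : Set (Set α)) : Prop :=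
  M.Indep B ∧ ∀ X ∈ 𝓧, M.IsBasis (X ∩ B) X

/-- A collection of sets is modular in `M` if it has a mutual basis. -/
def IsModularSetFamily (M : Matroid α) (𝓧 : Set (Set α)) : Prop :=
  ∃ B, M.IsMutualBasisSet B 𝓧

/-- `(X, Y)` is a modular pair in `M` if `{X, Y}` has a mutual basis. -/
def IsModularPair (M : Matroid α) (X Y : Set α) : Prop := M.IsModularSetFamily {X, Y}

/-- A flat `F` of `M` is modular if it forms a modular pair with every flat of `M`. -/
def IsModularFlat (M : Matroid α) (F : Set α) : Prop :=
  M.IsFlat F ∧ ∀ G, M.IsFlat G → M.IsModularPair F G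

/-- A matroid is modular if every flat is modular. -/
def Modular (M : Matroid α) : Prop := ∀ F, M.IsFlat F → M.IsModularFlat F

/-- An indexed family of sets is skew in `M` if it is modular in `M`, and the
intersection of any two distinct members consists of loops. -/
def IsSkewFamily (M : Matroid α) (X : ι → Set α) : Prop :=
  M.IsModularFamily X ∧ ∀ ⦃i j⦄, i ≠ j → X i ∩ X j ⊆ M.closure ∅

/-- A modular cut of `M` : a collection of flats that is up-closed, closed under
intersections of modular pairs, and closed under intersections of infinite
modular chains. -/
def IsModularCut (M : Matroid α) (𝓕 : Set (Set α)) : Prop :=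
  (∀ F ∈ 𝓕, M.IsFlat F) ∧
  (∀ F F', F ∈ 𝓕 → M.IsFlat F' → F ⊆ F' → F' ∈ 𝓕) ∧
  (∀ F F', F ∈ 𝓕 → F' ∈ 𝓕 → M.IsModularPair F F' → F ∩ F' ∈ 𝓕) ∧
  (∀ 𝓒 ⊆ 𝓕, 𝓒.Infinite → IsChain (· ⊆ ·) 𝓒 → M.IsModularSetFamily 𝓒 → ⋂₀ 𝓒 ∈ 𝓕)

/-- `N` is a quotient of `M` if they have the same ground set, and every set's closure
in `M` is contained in its closure in `N`. -/
def IsQuotient (N M : Matroid α) : Prop := N.E = M.E ∧ ∀ X, M.closure X ⊆ N.closure X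

/-- A hyperplane of `M` is a maximal proper flat of `M`. -/
def Hyperplane (M : Matroid α) (H : Set α) : Prop :=
  M.IsFlat H ∧ H ≠ M.E ∧ ∀ F, M.IsFlat F → H ⊂ F → F = M.E

/-- The discrepancy of the pair `(N, M)` : the minimum of `(B \ B₀).encard` over all
`(N,M)`-basis pairs, i.e. pairs `(B₀, B)` where `B₀` is a base of `N`, `B` is a base
of `M` and `B₀ ⊆ B`. -/
noncomputable def discrepancy (N M : Matroid α) : ℕ∞ :=
  ⨅ p : {p : Set α × Set α // N.IsBase p.1 ∧ M.IsBase p.2 ∧ p.1 ⊆ p.2},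
    (p.1.2 \ p.1.1).encard

section AuxiliaryLemmas

variable {M N : Matroid α} {X Y Z C D I R F S : Set α} {e f : α}

private lemma aux_flat_of_closure_subset (hFE : F ⊆ M.E) (h : M.closure F ⊆ F) : M.IsFlat F :=
  ⟨fun I X hIF hIX => hIX.subset_closure.trans (by rw [hIF.closure_eq_closure]; exact h),
    hFE⟩

private lemma aux_closure_flat (M : Matroid α) (X : Set α) : M.IsFlat (M.closure X) :=
  aux_flat_of_closure_subset (M.closure_subset_ground X) (by rw [closure_closure])

private lemma aux_circuit_mem_closure (hC : M.Circuit C) (he : e ∈ C) :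
    e ∈ M.closure (C \ {e}) := by
  by_contra hecl
  have hind : M.Indep (C \ {e}) := hC.2.2 _ (Set.diff_singleton_ssubset.2 he)
  have : M.Indep (insert e (C \ {e})) :=
    (hind.insert_indep_iff_of_notMem (by simp)).2 ⟨hC.1 he, hecl⟩
  rw [Set.insert_diff_singleton, Set.insert_eq_self.2 he] at this
  exact hC.2.1 this

private lemma aux_exists_circuit (hX : X ⊆ M.E) (he : e ∈ M.closure X) (heX : e ∉ X) :
    ∃ C, M.Circuit C ∧ e ∈ C ∧ C ⊆ insert e X := by
  have heE : e ∈ M.E := mem_ground_of_mem_closure he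
  obtain ⟨I, hI⟩ := M.exists_isBasis X hX
  have heI : e ∉ I := fun h => heX (hI.subset h)
  have hecl : e ∈ M.closure I := by rwa [hI.closure_eq_closure]
  set Js : Set (Set α) := {J | J ⊆ I ∧ e ∈ M.closure J} with hJs
  have hne : Js.Nonempty := ⟨I, Subset.rfl, hecl⟩
  have hIJs : I ∈ Js := ⟨Subset.rfl, hecl⟩
  set J0 := ⋂₀ Js with hJ0def
  have hJ0I : J0 ⊆ I := sInter_subset_of_mem hIJs
  have heJ0 : e ∉ J0 := fun h => heI (hJ0I h)
  have hJ0cl : e ∈ M.closure J0 := by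
    rw [hJ0def, hI.indep.closure_sInter_eq_biInter_closure_of_forall_subset hne
      (fun J hJ => hJ.1)]
    exact mem_iInter₂.2 fun J hJ => hJ.2
  have hJ0ind : M.Indep J0 := hI.indep.subset hJ0I
  refine ⟨insert e J0, ⟨?_, ?_, ?_⟩, mem_insert _ _,
    insert_subset_insert (hJ0I.trans hI.subset)⟩
  · exact insert_subset heE (hJ0I.trans hI.indep.subset_ground)
  · exact (hJ0ind.insert_dep_iff.2 ⟨hJ0cl, heJ0⟩).not_indep
  · intro S hS
    by_cases heS : e ∈ S
    · have hSK : S = insert e (S \ {e}) := by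
        rw [Set.insert_diff_singleton, Set.insert_eq_self.2 heS]
      have hK : S \ {e} ⊆ J0 := by
        rintro x ⟨hx, hxe⟩
        rcases hS.subset hx with h | h
        · exact absurd h hxe
        · exact h
      have hKne : S \ {e} ≠ J0 := by
        intro h
        exact hS.ne (by rw [hSK, h])
      have hKcl : e ∉ M.closure (S \ {e}) := by
        intro h
        exact hKne (subset_antisymm hK (sInter_subset_of_mem ⟨hK.trans hJ0I, h⟩))
      have : M.Indep (insert e (S \ {e})) :=
        ((hJ0ind.subset hK).insert_indep_iff_of_notMem (by simp)).2 ⟨heE, hKcl⟩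
      rwa [← hSK] at this
    · refine hJ0ind.subset fun x hx => ?_
      rcases hS.subset hx with h | h
      · exact absurd (h ▸ hx) heS
      · exact h

private lemma aux_cocircuit_compl_closure (hD : M✶.Circuit D) :
    M.closure (M.E \ D) = M.E \ D := by
  have hDE : D ⊆ M.E := hD.1
  refine subset_antisymm (fun f hf => ⟨mem_ground_of_mem_closure hf, fun hfD => ?_⟩)
    (M.subset_closure _ diff_subset)
  have hfE : f ∈ M.E := mem_ground_of_mem_closure hf
  have hind : M✶.Indep (D \ {f}) := hD.2.2 _ (Set.diff_singleton_ssubset.2 hfD)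
  have hco : M.Coindep (D \ {f}) := hind
  have hsp : M.Spanning (M.E \ (D \ {f})) :=
    (M.coindep_iff_compl_spanning (diff_subset.trans hDE)).1 hco
  have hEeq : M.E \ (D \ {f}) = insert f (M.E \ D) := by
    rw [Set.diff_diff_right, Set.inter_eq_self_of_subset_right (singleton_subset_iff.2 hfE),
      Set.union_singleton]
  rw [hEeq] at hsp
  have hclE : M.closure (insert f (M.E \ D)) = M.E :=
    (M.spanning_iff_closure_eq (insert_subset hfE diff_subset)).1 hsp
  rw [closure_insert_eq_of_mem_closure hf] at hclE
  have hsp2 : M.Spanning (M.E \ D) := (M.spanning_iff_closure_eq diff_subset).2 hclE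
  have : M.Coindep D := (M.coindep_iff_compl_spanning hDE).2 hsp2
  exact hD.2.1 this

private lemma aux_exists_cocircuit (hX : X ⊆ M.E) (heE : e ∈ M.E) (he : e ∉ M.closure X) :
    ∃ D, M✶.Circuit D ∧ e ∈ D ∧ Disjoint D X := by
  obtain ⟨I, hI⟩ := M.exists_isBasis X hX
  have heX : e ∉ X := fun h => he (M.subset_closure X hX h)
  have heI : e ∉ I := fun h => heX (hI.subset h)
  have hecl : e ∉ M.closure I := by rwa [hI.closure_eq_closure]
  have hins : M.Indep (insert e I) := (hI.indep.insert_indep_iff_of_notMem heI).2 ⟨heE, hecl⟩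
  obtain ⟨B, hB, hIB⟩ := hins.exists_isBase_superset
  have heB : e ∈ B := hIB (mem_insert _ _)
  have hIBe : I ⊆ B \ {e} := fun x hx =>
    ⟨hIB (mem_insert_of_mem _ hx), fun h => heI (h ▸ hx)⟩
  have hHE : M.closure (B \ {e}) ⊆ M.E := M.closure_subset_ground _
  have heH : e ∉ M.closure (B \ {e}) := hB.indep.notMem_closure_diff_of_mem heB
  have hXH : X ⊆ M.closure (B \ {e}) := by
    refine hI.subset_closure.trans ?_
    rw [hI.closure_eq_closure]
    nth_rewrite 1 [← hI.closure_eq_closure]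
    exact M.closure_subset_closure hIBe
  have hBeH : B \ {e} ⊆ M.closure (B \ {e}) :=
    M.subset_closure _ (diff_subset.trans hB.subset_ground)
  refine ⟨M.E \ M.closure (B \ {e}), ⟨?_, ?_, ?_⟩, ⟨heE, heH⟩, ?_⟩
  · exact diff_subset
  · intro hind
    have hco : M.Coindep (M.E \ M.closure (B \ {e})) := hind
    have hsp : M.Spanning (M.E \ (M.E \ M.closure (B \ {e}))) :=
      (M.coindep_iff_compl_spanning diff_subset).1 hco
    rw [Set.diff_diff_cancel_left hHE] at hsp
    have h1 : M.closure (M.closure (B \ {e})) = M.E :=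
      (M.spanning_iff_closure_eq hHE).1 hsp
    rw [closure_closure] at h1
    exact heH (h1 ▸ heE)
  · intro D' hD'
    obtain ⟨g, hgD, hgD'⟩ := exists_of_ssubset hD'
    have hD'E : D' ⊆ M.E := hD'.subset.trans diff_subset
    have hBeD' : ∀ x ∈ B \ ({e} : Set α), x ∉ D' := fun x hx hxD' =>
      (hD'.subset hxD').2 (hBeH hx)
    have hspan : M.Spanning (M.E \ D') := by
      by_cases hge : g = e
      · refine hB.spanning_of_superset (fun x hx => ⟨hB.subset_ground hx, fun hxD' => ?_⟩)
          diff_subset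
        by_cases hxe : x = e
        · exact hgD' (by rwa [hge, ← hxe])
        · exact hBeD' x ⟨hx, hxe⟩ hxD'
      · have hgE : g ∈ M.E := hgD.1
        have hgH : g ∉ M.closure (B \ {e}) := hgD.2
        have hgBe : g ∉ B \ ({e} : Set α) := fun h => hgH (hBeH h)
        have hgB : g ∉ B := fun h => hgBe ⟨h, hge⟩
        have hgind : M.Indep (insert g (B \ {e})) :=
          ((hB.indep.subset diff_subset).insert_indep_iff_of_notMem hgBe).2 ⟨hgE, hgH⟩
        have hgbase : M.IsBase (insert g (B \ {e})) := hB.exchange_isBase_of_indep hgB hgind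
        refine hgbase.spanning_of_superset (insert_subset ⟨hgE, hgD'⟩
          (fun x hx => ⟨diff_subset.trans hB.subset_ground hx, hBeD' x hx⟩)) diff_subset
    exact (M.coindep_iff_compl_spanning hD'E).2 hspan
  · exact Set.disjoint_left.2 fun x hx hxX => hx.2 (hXH hxX)

private lemma aux_not_mem_closure_iff (hX : X ⊆ M.E) (heE : e ∈ M.E) :
    e ∉ M.closure X ↔ ∃ D, M✶.Circuit D ∧ e ∈ D ∧ Disjoint D X := by
  constructor
  · exact aux_exists_cocircuit hX heE
  · rintro ⟨D, hD, heD, hdisj⟩ hecl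
    have hXc : X ⊆ M.E \ D := fun x hx => ⟨hX hx, fun hxD => hdisj.ne_of_mem hxD hx rfl⟩
    have := (M.closure_subset_closure hXc).trans (aux_cocircuit_compl_closure hD).subset
    exact (this hecl).2 heD

private lemma aux_quotient_indep (hQ : N.IsQuotient M) (hI : N.Indep I) : M.Indep I := by
  obtain ⟨hE, hcl⟩ := hQ
  have hIE : I ⊆ M.E := hE ▸ hI.subset_ground
  rw [indep_iff_forall_notMem_closure_diff hIE]
  exact fun e he hecl => hI.notMem_closure_diff_of_mem he (hcl _ hecl)

private lemma aux_restrict_circuit_iff (hR : R ⊆ M.E) :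
    (M ↾ R).Circuit C ↔ M.Circuit C ∧ C ⊆ R := by
  constructor
  · rintro ⟨hCR, hdep, hmin⟩
    exact ⟨⟨hCR.trans hR, fun hind => hdep (restrict_indep_iff.2 ⟨hind, hCR⟩),
      fun I hI => (restrict_indep_iff.1 (hmin I hI)).1⟩, hCR⟩
  · rintro ⟨⟨hCE, hdep, hmin⟩, hCR⟩
    exact ⟨hCR, fun hind => hdep (restrict_indep_iff.1 hind).1,
      fun I hI => restrict_indep_iff.2 ⟨hmin I hI, hI.subset.trans hCR⟩⟩

private lemma aux_contract_dual (M : Matroid α) (X : Set α) :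
    (M.contract' X)✶ = M✶ ↾ (M.E \ X) := by
  rw [contract', dual_dual]; rfl

private lemma aux_contract_ground (M : Matroid α) (X : Set α) :
    (M.contract' X).E = M.E \ X := rfl

private lemma aux_mem_contract_closure_iff (hX : X ⊆ M.E) (hZ : Z ⊆ M.E \ X)
    (heE : e ∈ M.E \ X) :
    e ∈ (M.contract' X).closure Z ↔ e ∈ M.closure (Z ∪ X) := by
  have hZE : Z ∪ X ⊆ M.E := union_subset (hZ.trans diff_subset) hX
  rw [← not_iff_not,
    aux_not_mem_closure_iff (M := M.contract' X) (show Z ⊆ (M.contract' X).E from hZ)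
      (show e ∈ (M.contract' X).E from heE),
    aux_not_mem_closure_iff hZE heE.1]
  constructor
  · rintro ⟨D, hD, heD, hdisj⟩
    rw [aux_contract_dual] at hD
    obtain ⟨hD', hDR⟩ := (aux_restrict_circuit_iff
      (show M.E \ X ⊆ M✶.E from diff_subset)).1 hD
    exact ⟨D, hD', heD, Set.disjoint_union_right.2
      ⟨hdisj, (Set.subset_diff.1 hDR).2⟩⟩
  · rintro ⟨D, hD, heD, hdisj⟩
    rw [Set.disjoint_union_right] at hdisj
    refine ⟨D, ?_, heD, hdisj.1⟩
    rw [aux_contract_dual]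
    exact (aux_restrict_circuit_iff (show M.E \ X ⊆ M✶.E from diff_subset)).2
      ⟨hD, Set.subset_diff.2 ⟨hD.1, hdisj.2⟩⟩

private lemma aux_contract_closure (hX : X ⊆ M.E) (hZ : Z ⊆ M.E \ X) :
    (M.contract' X).closure Z = M.closure (Z ∪ X) \ X := by
  ext e
  constructor
  · intro he
    have heE : e ∈ M.E \ X := (M.contract' X).closure_subset_ground Z he
    exact ⟨(aux_mem_contract_closure_iff hX hZ heE).1 he, heE.2⟩
  · rintro ⟨hecl, heX⟩
    have heE : e ∈ M.E \ X := ⟨mem_ground_of_mem_closure hecl, heX⟩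
    exact (aux_mem_contract_closure_iff hX hZ heE).2 hecl

private lemma aux_quotient_contract (hQ : N.IsQuotient M) (hX : X ⊆ M.E) :
    (N.contract' X).IsQuotient (M.contract' X) := by
  obtain ⟨hE, hcl⟩ := hQ
  have hXN : X ⊆ N.E := hE ▸ hX
  refine ⟨show N.E \ X = M.E \ X by rw [hE], fun Z => ?_⟩
  have hZM : Z ∩ (M.E \ X) ⊆ M.E \ X := inter_subset_right
  have hZN : Z ∩ (M.E \ X) ⊆ N.E \ X := by rw [hE]; exact inter_subset_right
  calc (M.contract' X).closure Z
      = (M.contract' X).closure (Z ∩ (M.E \ X)) := ((M.contract' X).closure_inter_ground Z).symm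
    _ = M.closure ((Z ∩ (M.E \ X)) ∪ X) \ X := aux_contract_closure hX hZM
    _ ⊆ N.closure ((Z ∩ (M.E \ X)) ∪ X) \ X := diff_subset_diff_left (hcl _)
    _ = (N.contract' X).closure (Z ∩ (M.E \ X)) := (aux_contract_closure hXN hZN).symm
    _ = (N.contract' X).closure (Z ∩ (N.E \ X)) := by rw [hE]
    _ = (N.contract' X).closure Z := (N.contract' X).closure_inter_ground Z

private lemma aux_eRk_mono {M M' : Matroid α} (h : ∀ I, M.Indep I → M'.Indep I) (S : Set α) :
    M.eRk' S ≤ M'.eRk' S :=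
  iSup_le fun I => le_iSup_of_le (⟨I.1, h _ I.2.1, I.2.2⟩ : {J // M'.Indep J ∧ J ⊆ S}) le_rfl

private lemma aux_contract_indep_singleton (hX : X ⊆ M.E) (he : e ∈ M.E \ X) :
    (M.contract' X).Indep {e} ↔ e ∉ M.closure X := by
  have hg : ({e} : Set α) ⊆ (M.contract' X).E := singleton_subset_iff.2 he
  rw [indep_iff_forall_notMem_closure_diff hg]
  have hds : ({e} : Set α) \ {e} = ∅ := by simp
  simp only [mem_singleton_iff, forall_eq, hds]
  rw [aux_contract_closure hX (empty_subset _), empty_union]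
  simp [mem_diff, he.2]

private lemma aux_insert_diff_self (heX : e ∉ X) : insert e X \ X = {e} := by
  ext x
  simp only [mem_diff, mem_insert_iff, mem_singleton_iff]
  constructor
  · rintro ⟨h | h, hx⟩
    · exact h
    · exact absurd h hx
  · rintro rfl
    exact ⟨Or.inl rfl, heX⟩

private lemma aux_eRelRk_insert_zero (hX : X ⊆ M.E) (he : e ∈ M.closure X) (heX : e ∉ X) :
    M.eRelRk X (insert e X) = 0 := by
  rw [eRelRk, aux_insert_diff_self heX]
  refine le_antisymm (iSup_le ?_) zero_le
  rintro ⟨I, hI, hIe⟩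
  rcases subset_singleton_iff_eq.1 hIe with rfl | rfl
  · simp
  · exact absurd he ((aux_contract_indep_singleton hX
      ⟨mem_ground_of_mem_closure he, heX⟩).1 hI)

private lemma aux_one_le_eRelRk_insert (hX : X ⊆ M.E) (heE : e ∈ M.E)
    (he : e ∉ M.closure X) (heX : e ∉ X) : 1 ≤ M.eRelRk X (insert e X) := by
  have hind : (M.contract' X).Indep {e} :=
    (aux_contract_indep_singleton hX ⟨heE, heX⟩).2 he
  rw [eRelRk, aux_insert_diff_self heX]
  have := le_iSup (fun I : {I // (M.contract' X).Indep I ∧ I ⊆ ({e} : Set α)} => I.1.encard)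
    ⟨{e}, hind, Subset.rfl⟩
  simpa [eRk'] using this

private lemma aux_quotient_iff_star (hE : N.E = M.E) :
    N.IsQuotient M ↔ ∀ C D e, M.Circuit C → N✶.Circuit D → C ∩ D ≠ {e} := by
  constructor
  · rintro ⟨-, hcl⟩ C D e hC hD hCD
    have he : e ∈ C ∩ D := hCD ▸ rfl
    have hecl : e ∈ N.closure (C \ {e}) := hcl _ (aux_circuit_mem_closure hC he.1)
    have hsub : C \ {e} ⊆ N.E \ D := fun x hx =>
      ⟨hE ▸ hC.1 hx.1, fun hxD => hx.2 (show x ∈ ({e} : Set α) from hCD ▸ ⟨hx.1, hxD⟩)⟩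
    have := (N.closure_subset_closure hsub).trans (aux_cocircuit_compl_closure hD).subset
    exact (this hecl).2 he.2
  · intro hstar
    refine ⟨hE, fun X f hf => ?_⟩
    have hfE : f ∈ M.E := mem_ground_of_mem_closure hf
    have hf' : f ∈ M.closure (X ∩ M.E) := by rwa [closure_inter_ground]
    rw [show N.closure X = N.closure (X ∩ M.E) by rw [← hE, closure_inter_ground]]
    by_cases hfX : f ∈ X ∩ M.E
    · exact N.subset_closure _ (by rw [hE]; exact inter_subset_right) hfX
    · obtain ⟨C, hC, hfC, hCX⟩ := aux_exists_circuit inter_subset_right hf' hfX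
      by_contra hfN
      obtain ⟨D, hD, hfD, hdisj⟩ := aux_exists_cocircuit (M := N)
        (show X ∩ M.E ⊆ N.E by rw [hE]; exact inter_subset_right) (hE ▸ hfE) hfN
      refine hstar C D f hC hD ?_
      ext x
      simp only [mem_inter_iff, mem_singleton_iff]
      constructor
      · rintro ⟨hxC, hxD⟩
        rcases hCX hxC with h | h
        · exact h
        · exact (hdisj.ne_of_mem hxD h rfl).elim
      · rintro rfl
        exact ⟨hfC, hfD⟩

end AuxiliaryLemmas

/-- For matroids `M`, `N` on a common ground set, the following are
equivalent : (1) `N` is a quotient of `M`; (2) `M✶` is a quotient of `N✶`;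
(3) every flat of `N` is a flat of `M`; (4) every circuit of `M` is a union of
circuits of `N`; (5) relative rank in `N` is at most relative rank in `M`. -/
theorem isQuotient_tfae (M N : Matroid α) (hE : N.E = M.E) :
    (N.IsQuotient M ↔ M✶.IsQuotient N✶) ∧
    (N.IsQuotient M ↔ ∀ F, N.IsFlat F → M.IsFlat F) ∧
    (N.IsQuotient M ↔ ∀ C, M.Circuit C →
      ∃ 𝓒 : Set (Set α), (∀ C' ∈ 𝓒, N.Circuit C') ∧ C = ⋃₀ 𝓒) ∧
    (N.IsQuotient M ↔ ∀ X Y, X ⊆ Y → Y ⊆ M.E → N.eRelRk X Y ≤ M.eRelRk X Y) := by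
  refine ⟨?_, ?_, ?_, ?_⟩
  · -- (1) ↔ (2)
    rw [aux_quotient_iff_star hE,
      aux_quotient_iff_star (M := N✶) (N := M✶) (show M✶.E = N✶.E from hE.symm)]
    simp only [dual_dual]
    constructor
    · intro h C D e hC hD hCD
      exact h D C e hD hC (by rwa [Set.inter_comm])
    · intro h C D e hC hD hCD
      exact h D C e hD hC (by rwa [Set.inter_comm])
  · -- (1) ↔ (3)
    constructor
    · rintro ⟨-, hcl⟩ F hF
      exact aux_flat_of_closure_subset (hE ▸ hF.subset_ground)
        ((hcl F).trans hF.closure.subset)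
    · intro h
      refine ⟨hE, fun X => ?_⟩
      have hflat : M.IsFlat (N.closure X) := h _ (aux_closure_flat N X)
      calc M.closure X = M.closure (X ∩ M.E) := (M.closure_inter_ground X).symm
        _ ⊆ M.closure (N.closure X) := M.closure_subset_closure
            (by rw [← hE]; exact N.inter_ground_subset_closure X)
        _ = N.closure X := hflat.closure
  · -- (1) ↔ (4)
    constructor
    · rintro hQ C hC
      refine ⟨{C' | N.Circuit C' ∧ C' ⊆ C}, fun C' h => h.1, ?_⟩
      refine subset_antisymm (fun e he => ?_) (sUnion_subset fun C' h => h.2)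
      have h1 : e ∈ N.closure (C \ {e}) := hQ.2 _ (aux_circuit_mem_closure hC he)
      have heC : e ∉ C \ ({e} : Set α) := by simp
      obtain ⟨C', hC', heC', hsub⟩ := aux_exists_circuit (M := N)
        (show C \ {e} ⊆ N.E by rw [hE]; exact diff_subset.trans hC.1) h1 heC
      rw [Set.insert_diff_singleton, Set.insert_eq_self.2 he] at hsub
      exact mem_sUnion.2 ⟨C', ⟨hC', hsub⟩, heC'⟩
    · intro h
      refine ⟨hE, fun X f hf => ?_⟩
      have hfE : f ∈ M.E := mem_ground_of_mem_closure hf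
      have hf' : f ∈ M.closure (X ∩ M.E) := by rwa [closure_inter_ground]
      rw [show N.closure X = N.closure (X ∩ M.E) by rw [← hE, closure_inter_ground]]
      by_cases hfX : f ∈ X ∩ M.E
      · exact N.subset_closure _ (by rw [hE]; exact inter_subset_right) hfX
      · obtain ⟨C, hC, hfC, hCX⟩ := aux_exists_circuit inter_subset_right hf' hfX
        obtain ⟨𝓒, h𝓒, hCeq⟩ := h C hC
        obtain ⟨C', hC'mem, hfC'⟩ := mem_sUnion.1 (hCeq ▸ hfC)
        have hC' : N.Circuit C' := h𝓒 C' hC'mem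
        have h2 : f ∈ N.closure (C' \ {f}) := aux_circuit_mem_closure hC' hfC'
        refine N.closure_subset_closure (fun x hx => ?_) h2
        have hxC : x ∈ C := hCeq ▸ mem_sUnion.2 ⟨C', hC'mem, hx.1⟩
        rcases hCX hxC with h' | h'
        · exact absurd h' hx.2
        · exact h'
  · -- (1) ↔ (5)
    constructor
    · rintro hQ X Y hXY hYE
      have hXE : X ⊆ M.E := hXY.trans hYE
      have hcon := aux_quotient_contract hQ hXE
      exact aux_eRk_mono (fun I hI => aux_quotient_indep hcon hI) _
    · intro h
      refine ⟨hE, fun X f hf => ?_⟩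
      have hfE : f ∈ M.E := mem_ground_of_mem_closure hf
      have hf' : f ∈ M.closure (X ∩ M.E) := by rwa [closure_inter_ground]
      rw [show N.closure X = N.closure (X ∩ M.E) by rw [← hE, closure_inter_ground]]
      by_contra hfN
      have hfX : f ∉ X ∩ M.E := fun h' =>
        hfN (N.subset_closure _ (by rw [hE]; exact inter_subset_right) h')
      have h1 := aux_one_le_eRelRk_insert (M := N)
        (show X ∩ M.E ⊆ N.E by rw [hE]; exact inter_subset_right) (hE ▸ hfE) hfN hfX
      have h0 := aux_eRelRk_insert_zero inter_subset_right hf' hfX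
      have h5 := h (X ∩ M.E) (insert f (X ∩ M.E)) (subset_insert _ _)
        (insert_subset hfE inter_subset_right)
      rw [h0] at h5
      exact absurd (h1.trans h5) (by simp)


end Matroid
end

section
/- Let X be a subset of the ground set of a matroid M, and let I be a basis of X in M. Then λ_M(X) = r_{M*}(X | X − I), i.e. the connectivity of X equals the relative rank, in the dual matroid M*, of X relative to X − I. -/
open Set

namespace Matroid

variable {α : Type*} {ι : Type*}

lemma eRk_eq_encard_of_basis' {M : Matroid α} {B X : Set α} (hB : M.IsBasis B X) :
    M.eRk' X = B.encard := by
  refine le_antisymm (iSup_le fun K => ?_) ?_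
  · obtain ⟨B₂, hB₂, hKB₂⟩ := K.2.1.subset_isBasis_of_subset K.2.2 hB.subset_ground
    exact (encard_mono hKB₂).trans (hB₂.encard_eq_encard hB).le
  · exact le_iSup (fun K : {I : Set α // M.Indep I ∧ I ⊆ X} => K.1.encard)
      ⟨B, hB.indep, hB.subset⟩

lemma eRank_eq_encard_of_base' {M : Matroid α} {B : Set α} (hB : M.IsBase B) :
    M.eRank' = B.encard :=
  eRk_eq_encard_of_basis' hB.isBasis_ground

/-- For every basis `I` of `X` in `M` (and any basis `J` of `E(M) \ X`,
so that the left-hand side is the connectivity `λ_M(X) = n_M(I ∪ J)`), the connectivity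
of `X` equals the relative rank in `M✶` of `X` with respect to `X \ I`. -/
theorem conn_eq_eRelRk_dual (M : Matroid α) {X I J : Set α}
    (hI : M.IsBasis I X) (hJ : M.IsBasis J (M.E \ X)) :
    M.nullity (I ∪ J) = M✶.eRelRk (X \ I) X := by
  have hIX : I ⊆ X := hI.subset
  have hXE : X ⊆ M.E := hI.subset_ground
  have hIE : I ⊆ M.E := hIX.trans hXE
  have hJEX : J ⊆ M.E \ X := hJ.subset
  set G := M.E \ (X \ I) with hG
  have hIG : I ⊆ G := fun e he => ⟨hIE he, fun h => h.2 he⟩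
  have hJG : J ⊆ G := fun e he => ⟨(hJEX he).1, fun h => (hJEX he).2 h.1⟩
  have hGE : G ⊆ M.E := diff_subset
  have hIJE : I ∪ J ⊆ M.E := union_subset hIE (hJEX.trans diff_subset)
  obtain ⟨B, hB, hJB⟩ := hJ.indep.subset_isBasis_of_subset (subset_union_right (s := I)) hIJE
  have hBIJ : B ⊆ I ∪ J := hB.subset
  have hBG : B ⊆ G := hBIJ.trans (union_subset hIG hJG)
  -- `B` is also a basis of `G`.
  have hBbG : M.IsBasis B G := by
    refine hB.indep.isBasis_of_forall_insert hBG fun e he => ?_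
    by_cases heX : e ∈ X
    · have heI : e ∈ I := by
        by_contra h; exact he.1.2 ⟨heX, h⟩
      exact hB.insert_dep ⟨Or.inl heI, he.2⟩
    · have hdep : M.Dep (insert e J) :=
        hJ.insert_dep ⟨⟨he.1.1, heX⟩, fun h => he.2 (hJB h)⟩
      exact hdep.superset (insert_subset_insert hJB)
        (insert_subset he.1.1 (hBIJ.trans hIJE))
  set K := I \ B with hK
  set N := M ↾ G with hN
  have hNE : N.E = G := rfl
  have hBbase : N.IsBase B := hBbG.isBase_restrict
  have hKG : K ⊆ G := (diff_subset.trans hIG)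
  have hKiN : N✶.Indep K := by
    rw [dual_indep_iff_exists (by rwa [hNE])]
    exact ⟨B, hBbase, disjoint_sdiff_left⟩
  -- `K` is a basis of `I` in `N✶`.
  have hKbasis : N✶.IsBasis K I := by
    refine hKiN.isBasis_of_forall_insert diff_subset fun e he => ?_
    have heI : e ∈ I := he.1
    have heB : e ∈ B := by
      by_contra h; exact he.2 ⟨heI, h⟩
    rw [dep_iff]
    refine ⟨fun hind => ?_, insert_subset (hIG heI) hKG⟩
    rw [dual_indep_iff_exists
      (show insert e K ⊆ N.E from insert_subset (hIG heI) hKG)] at hind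
    obtain ⟨B₂, hB₂, hdj⟩ := hind
    have hB₂G : M.IsBasis B₂ G := (isBase_restrict_iff hGE).1 hB₂
    have heB₂ : e ∈ M.closure B₂ := hB₂G.subset_closure (hIG heI)
    have heJ : e ∉ J := fun h => (hJEX h).2 (hIX heI)
    have hJBe : J ⊆ B \ {e} := fun f hf => ⟨hJB hf, fun h => heJ (h ▸ hf)⟩
    have hB₂sub : B₂ ⊆ (B \ {e}) ∪ (M.E \ X) := by
      intro f hf
      by_cases hfX : f ∈ X
      · have hfI : f ∈ I := by
          by_contra h; exact (hB₂G.subset hf).2 ⟨hfX, h⟩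
        have hfB : f ∈ B := by
          by_contra h
          exact hdj.ne_of_mem (mem_insert_of_mem e ⟨hfI, h⟩) hf rfl
        refine Or.inl ⟨hfB, fun hfe => ?_⟩
        exact hdj.ne_of_mem (mem_insert e K) hf hfe.symm
      · exact Or.inr ⟨hGE (hB₂G.subset hf), hfX⟩
    have hcl : M.closure ((B \ {e}) ∪ (M.E \ X)) ⊆ M.closure (B \ {e}) := by
      refine closure_subset_closure_of_subset_closure (union_subset ?_ ?_)
      · exact M.subset_closure _ ((diff_subset.trans hBG).trans hGE)
      · exact hJ.subset_closure.trans (M.closure_subset_closure hJBe)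
    have : e ∈ M.closure (B \ {e}) := hcl (M.closure_subset_closure hB₂sub heB₂)
    exact hB.indep.notMem_closure_sdiff_of_mem heB this
  -- Compute the right-hand side.
  have hcon : M✶.contract' (X \ I) = N✶ := by
    rw [Matroid.contract', Matroid.delete', dual_dual]
  have hXXI : X \ (X \ I) = I := diff_diff_cancel_left hIX
  have hRHS : M✶.eRelRk (X \ I) X = K.encard := by
    rw [Matroid.eRelRk, hcon, hXXI, eRk_eq_encard_of_basis' hKbasis]
  -- Compute the left-hand side.
  have hbase' : (M ↾ (I ∪ J))✶.IsBase ((I ∪ J) \ B) := by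
    rw [dual_isBase_iff (show (I ∪ J) \ B ⊆ (M ↾ (I ∪ J)).E from diff_subset)]
    rw [show (M ↾ (I ∪ J)).E = I ∪ J from rfl, diff_diff_cancel_left hBIJ]
    exact hB.isBase_restrict
  have hIJB : (I ∪ J) \ B = K := by
    rw [union_diff_distrib, diff_eq_empty.mpr hJB, union_empty]
  rw [Matroid.nullity, eRank_eq_encard_of_base' hbase', hIJB, hRHS]
end Matroid
end
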